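/- A nontrivial finite abelian group G admits an unmixed Beauville structure if and only if there exists an integer n > 1 with gcd(n, 6) = 1 such that G is isomorphic to (ℤ/nℤ) × (ℤ/nℤ). -/

import Mathlib

set_option linter.unusedSectionVars false
set_option maxHeartbeats 1000000

/-- `Σ(a,c)`: the set of all conjugates of all powers of `a`, `c` and `ac`. -/
def beauvilleSigma {G : Type*} [Group G] (a c : G) : Set G :=
  ⋃ g : G, ⋃ i : ℕ, {g * a ^ i * g⁻¹, g * c ^ i * g⁻¹, g * (a * c) ^ i * g⁻¹}

/-- An unmixed Beauville structure on `G`: two generating pairs whose associated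
sets `Σ` intersect trivially. -/
def IsUnmixedBeauvilleStructure {G : Type*} [Group G] (a₁ c₁ a₂ c₂ : G) : Prop :=
  Subgroup.closure {a₁, c₁} = ⊤ ∧ Subgroup.closure {a₂, c₂} = ⊤ ∧
    beauvilleSigma a₁ c₁ ∩ beauvilleSigma a₂ c₂ = {1}

lemma mem_sigma_iff {G : Type*} [CommGroup G] {a c x : G} :
    x ∈ beauvilleSigma a c ↔ ∃ i : ℕ, x = a ^ i ∨ x = c ^ i ∨ x = (a * c) ^ i := by
  simp only [beauvilleSigma, Set.mem_iUnion, Set.mem_insert_iff, Set.mem_singleton_iff]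
  constructor
  · rintro ⟨g, i, h⟩
    exact ⟨i, by simpa [mul_comm, mul_assoc, mul_left_comm] using h⟩
  · rintro ⟨i, h⟩
    exact ⟨1, i, by simpa using h⟩

section Transport
variable {G H : Type*} [CommGroup G] [CommGroup H]

lemma sigma_map (e : G ≃* H) (a c x : G) :
    x ∈ beauvilleSigma a c ↔ e x ∈ beauvilleSigma (e a) (e c) := by
  rw [mem_sigma_iff, mem_sigma_iff]
  constructor
  · rintro ⟨i, (rfl | rfl | rfl)⟩ <;> exact ⟨i, by simp⟩
  · rintro ⟨i, h⟩
    refine ⟨i, ?_⟩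
    rcases h with h | h | h
    · exact Or.inl (e.injective (by simpa using h))
    · exact Or.inr (Or.inl (e.injective (by simpa using h)))
    · exact Or.inr (Or.inr (e.injective (by simpa using h)))

lemma isUnmixed_map (e : G ≃* H) {a₁ c₁ a₂ c₂ : G}
    (h : IsUnmixedBeauvilleStructure a₁ c₁ a₂ c₂) :
    IsUnmixedBeauvilleStructure (e a₁) (e c₁) (e a₂) (e c₂) := by
  obtain ⟨h1, h2, h3⟩ := h
  have key : ∀ a c : G, Subgroup.closure {a, c} = ⊤ →
      Subgroup.closure {e a, e c} = ⊤ := by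
    intro a c hac
    have : ({e a, e c} : Set H) = e '' {a, c} := by simp [Set.image_insert_eq]
    rw [this, ← MulEquiv.coe_toMonoidHom, ← MonoidHom.map_closure, hac]
    exact Subgroup.map_top_of_surjective _ e.surjective
  refine ⟨key _ _ h1, key _ _ h2, ?_⟩
  ext y
  simp only [Set.mem_inter_iff, Set.mem_singleton_iff]
  constructor
  · rintro ⟨hy1, hy2⟩
    have : e.symm y ∈ beauvilleSigma a₁ c₁ ∩ beauvilleSigma a₂ c₂ :=
      ⟨(sigma_map e a₁ c₁ (e.symm y)).2 (by rwa [e.apply_symm_apply]),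
       (sigma_map e a₂ c₂ (e.symm y)).2 (by rwa [e.apply_symm_apply])⟩
    rw [h3, Set.mem_singleton_iff] at this
    have := congrArg e this
    simpa using this
  · rintro rfl
    constructor <;>
      exact mem_sigma_iff.2 ⟨0, by simp⟩

end Transport

section ZM
variable {n : ℕ} [NeZero n]

noncomputable def oA {n : ℕ} (u : ZMod n × ZMod n) : Multiplicative (ZMod n × ZMod n) :=
  Multiplicative.ofAdd u

lemma oA_pow (u : ZMod n × ZMod n) (k : ℕ) : (oA u) ^ k = oA ((k : ZMod n) • u) := by
  rw [oA, ← ofAdd_nsmul, Nat.cast_smul_eq_nsmul]; rfl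

lemma oA_mul (u v : ZMod n × ZMod n) : oA u * oA v = oA (u + v) := rfl

lemma oA_inj {u v : ZMod n × ZMod n} (h : oA u = oA v) : u = v := h

lemma det_cancel {u v : ZMod n × ZMod n} (h : IsUnit (u.1 * v.2 - u.2 * v.1))
    {k l : ZMod n} (hk : k • u = l • v) : k = 0 := by
  have h1 : k * u.1 = l * v.1 := congrArg Prod.fst hk
  have h2 : k * u.2 = l * v.2 := congrArg Prod.snd hk
  have key : k * (u.1 * v.2 - u.2 * v.1) = 0 := by
    have e1 : k * u.1 * v.2 = l * v.1 * v.2 := by rw [h1]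
    have e2 : k * u.2 * v.1 = l * v.2 * v.1 := by rw [h2]
    calc k * (u.1 * v.2 - u.2 * v.1) = k * u.1 * v.2 - k * u.2 * v.1 := by ring
    _ = l * v.1 * v.2 - l * v.2 * v.1 := by rw [e1, e2]
    _ = 0 := by ring
  rcases h.exists_right_inv with ⟨w, hw⟩
  calc k = k * ((u.1 * v.2 - u.2 * v.1) * w) := by rw [hw, mul_one]
  _ = k * (u.1 * v.2 - u.2 * v.1) * w := by ring
  _ = 0 := by rw [key, zero_mul]

lemma cancel_case {x : Multiplicative (ZMod n × ZMod n)} {w₁ w₂ : ZMod n × ZMod n}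
    (h : IsUnit (w₁.1 * w₂.2 - w₁.2 * w₂.1)) {i j : ℕ}
    (h1 : x = (oA w₁) ^ i) (h2 : x = (oA w₂) ^ j) : x = 1 := by
  rw [oA_pow] at h1 h2
  have hk : (i : ZMod n) • w₁ = (j : ZMod n) • w₂ := oA_inj (h1.symm.trans h2)
  have h0 := det_cancel h hk
  rw [h1, h0, zero_smul]
  rfl

lemma gen_pair {u v : ZMod n × ZMod n} (h : IsUnit (u.1 * v.2 - u.2 * v.1)) :
    Subgroup.closure ({oA u, oA v} : Set (Multiplicative (ZMod n × ZMod n))) = ⊤ := by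
  rw [Subgroup.eq_top_iff']
  intro x
  obtain ⟨w', hw⟩ := h.exists_right_inv
  set w : ZMod n × ZMod n := x.toAdd with hwdef
  set k : ZMod n := (w.1 * v.2 - w.2 * v.1) * w' with hk
  set l : ZMod n := (u.1 * w.2 - u.2 * w.1) * w' with hl
  have hx : x = (oA u) ^ k.val * (oA v) ^ l.val := by
    rw [oA_pow, oA_pow, ZMod.natCast_rightInverse k, ZMod.natCast_rightInverse l, oA_mul]
    have : w = k • u + l • v := by
      have c1 : k * u.1 + l * v.1 = w.1 := by
        rw [hk, hl]; linear_combination w.1 * hw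
      have c2 : k * u.2 + l * v.2 = w.2 := by
        rw [hk, hl]; linear_combination w.2 * hw
      ext
      · simpa using c1.symm
      · simpa using c2.symm
    show x = oA (k • u + l • v)
    rw [← this]
    rfl
  rw [hx]
  exact mul_mem (pow_mem (Subgroup.subset_closure (by simp)) _)
    (pow_mem (Subgroup.subset_closure (by simp)) _)

lemma zm_structure (hn : 1 < n) (h6 : Nat.gcd n 6 = 1) :
    IsUnmixedBeauvilleStructure (oA ((1 : ZMod n), (0 : ZMod n))) (oA (0, 1))
      (oA (1, -1)) (oA (1, 2)) := by
  have hco : Nat.Coprime n 6 := h6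
  have h2 : IsUnit (2 : ZMod n) := by
    have : Nat.Coprime 2 n := (hco.coprime_dvd_right (by norm_num)).symm
    simpa using ZMod.isUnit_iff_coprime 2 n |>.2 this
  have h3 : IsUnit (3 : ZMod n) := by
    have : Nat.Coprime 3 n := (hco.coprime_dvd_right (by norm_num)).symm
    simpa using ZMod.isUnit_iff_coprime 3 n |>.2 this
  have h1 : IsUnit (1 : ZMod n) := isUnit_one
  have hm1 : IsUnit (-1 : ZMod n) := h1.neg
  have hm2 : IsUnit (-2 : ZMod n) := h2.neg
  refine ⟨gen_pair (by norm_num), gen_pair (by norm_num; exact h3), ?_⟩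
  have hmul1 : oA ((1 : ZMod n), (0 : ZMod n)) * oA (0, 1) = oA (1, 1) := by
    rw [oA_mul]; norm_num
  have hmul2 : oA ((1 : ZMod n), (-1 : ZMod n)) * oA (1, 2) = oA (2, 1) := by
    rw [oA_mul]; norm_num
  ext x
  simp only [Set.mem_inter_iff, Set.mem_singleton_iff]
  constructor
  · rintro ⟨hx1, hx2⟩
    rw [mem_sigma_iff] at hx1 hx2
    rw [hmul1] at hx1
    rw [hmul2] at hx2
    obtain ⟨i, hi⟩ := hx1
    obtain ⟨j, hj⟩ := hx2
    rcases hi with hi | hi | hi <;> rcases hj with hj | hj | hj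
    · exact cancel_case (w₁ := (1,0)) (w₂ := (1,-1)) (by norm_num <;> exact h2) hi hj
    · exact cancel_case (w₁ := (1,0)) (w₂ := (1,2)) (by norm_num <;> exact h2) hi hj
    · exact cancel_case (w₁ := (1,0)) (w₂ := (2,1)) (by norm_num <;> exact h2) hi hj
    · exact cancel_case (w₁ := (0,1)) (w₂ := (1,-1)) (by norm_num <;> exact h2) hi hj
    · exact cancel_case (w₁ := (0,1)) (w₂ := (1,2)) (by norm_num <;> exact h2) hi hj
    · exact cancel_case (w₁ := (0,1)) (w₂ := (2,1)) (by norm_num <;> exact h2) hi hj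
    · exact cancel_case (w₁ := (1,1)) (w₂ := (1,-1)) (by norm_num <;> exact h2) hi hj
    · exact cancel_case (w₁ := (1,1)) (w₂ := (1,2)) (by norm_num <;> exact h2) hi hj
    · exact cancel_case (w₁ := (1,1)) (w₂ := (2,1)) (by norm_num <;> exact h2) hi hj
  · rintro rfl
    exact ⟨mem_sigma_iff.2 ⟨0, by simp⟩, mem_sigma_iff.2 ⟨0, by simp⟩⟩

end ZM

section Fwd
variable {G : Type*} [CommGroup G] [Finite G]

lemma pow_pow_mem_sigma (a c : G) (m k : ℕ) : (a ^ m) ^ k ∈ beauvilleSigma a c :=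
  mem_sigma_iff.2 ⟨m * k, Or.inl (by rw [pow_mul])⟩

lemma pow_pow_mem_sigma' (a c : G) (m k : ℕ) : (c ^ m) ^ k ∈ beauvilleSigma a c :=
  mem_sigma_iff.2 ⟨m * k, Or.inr (Or.inl (by rw [pow_mul]))⟩

lemma pow_pow_mem_sigma'' (a c : G) (m k : ℕ) : ((a * c) ^ m) ^ k ∈ beauvilleSigma a c :=
  mem_sigma_iff.2 ⟨m * k, Or.inr (Or.inr (by rw [pow_mul]))⟩

lemma zpowers_subset_sigma_left (a c : G) (m : ℕ) :
    (Subgroup.zpowers (a ^ m) : Set G) ⊆ beauvilleSigma a c := by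
  intro x hx
  have : x ∈ Submonoid.powers (a ^ m) :=
    ((isOfFinOrder_of_finite _).mem_powers_iff_mem_zpowers).2 hx
  obtain ⟨k, hk⟩ := this
  exact hk ▸ pow_pow_mem_sigma a c m k

lemma zpowers_subset_sigma_right (a c : G) (m : ℕ) :
    (Subgroup.zpowers (c ^ m) : Set G) ⊆ beauvilleSigma a c := by
  intro x hx
  have : x ∈ Submonoid.powers (c ^ m) :=
    ((isOfFinOrder_of_finite _).mem_powers_iff_mem_zpowers).2 hx
  obtain ⟨k, hk⟩ := this
  exact hk ▸ pow_pow_mem_sigma' a c m k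

lemma zpowers_subset_sigma_mul (a c : G) (m : ℕ) :
    (Subgroup.zpowers ((a * c) ^ m) : Set G) ⊆ beauvilleSigma a c := by
  intro x hx
  have : x ∈ Submonoid.powers ((a * c) ^ m) :=
    ((isOfFinOrder_of_finite _).mem_powers_iff_mem_zpowers).2 hx
  obtain ⟨k, hk⟩ := this
  exact hk ▸ pow_pow_mem_sigma'' a c m k

end Fwd

section Fwd2
variable {G : Type*} [CommGroup G] [Finite G]

lemma closure_pow_eq {a c : G} (m : ℕ) (h : Subgroup.closure {a, c} = ⊤) :
    Subgroup.map (powMonoidHom m : G →* G) ⊤ = Subgroup.closure {a ^ m, c ^ m} := by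
  rw [← h, MonoidHom.map_closure]
  congr 1
  rw [Set.image_pair]
  rfl

lemma side_facts {a₁ c₁ a₂ c₂ : G}
    (hg1 : Subgroup.closure {a₁, c₁} = ⊤) (hg2 : Subgroup.closure {a₂, c₂} = ⊤)
    (hd : ∀ x : G, x ∈ beauvilleSigma a₁ c₁ → x ∈ beauvilleSigma a₂ c₂ → x = 1)
    {m : ℕ} (hEne : ∃ g : G, g ^ m ≠ 1) :
    a₁ ^ m ≠ 1 ∧ c₁ ^ m ≠ 1 ∧ a₁ ^ m * c₁ ^ m ≠ 1 ∧
      c₁ ^ m ∉ Subgroup.zpowers (a₁ ^ m) := by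
  have hC : ∀ x : G, (x = a₁ ∨ x = c₁ ∨ x = a₁ * c₁) →
      Subgroup.closure {a₁ ^ m, c₁ ^ m} ≤ Subgroup.zpowers (x ^ m) → False := by
    intro x hx hle
    obtain ⟨g, hg⟩ := hEne
    -- the image subgroup is nontrivial and generated by a₂^m, c₂^m
    have hE2 : Subgroup.map (powMonoidHom m : G →* G) ⊤ =
        Subgroup.closure {a₂ ^ m, c₂ ^ m} := closure_pow_eq m hg2
    have hE1 : Subgroup.map (powMonoidHom m : G →* G) ⊤ =
        Subgroup.closure {a₁ ^ m, c₁ ^ m} := closure_pow_eq m hg1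
    -- find a nontrivial element among a₂^m, c₂^m
    have hz : ∃ z : G, z ≠ 1 ∧ (z = a₂ ^ m ∨ z = c₂ ^ m) := by
      by_contra hcon
      push_neg at hcon
      have ha : a₂ ^ m = 1 := by
        by_contra h; exact (hcon _ h).1 rfl
      have hc : c₂ ^ m = 1 := by
        by_contra h; exact (hcon _ h).2 rfl
      have hbot : Subgroup.closure ({a₂ ^ m, c₂ ^ m} : Set G) ≤ ⊥ := by
        rw [Subgroup.closure_le]; rintro y (rfl | rfl) <;> simp [ha, hc]
      have hgm : g ^ m ∈ Subgroup.map (powMonoidHom m : G →* G) ⊤ := ⟨g, trivial, rfl⟩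
      rw [hE2] at hgm
      exact hg (by simpa using hbot hgm)
    obtain ⟨z, hz1, hz2⟩ := hz
    have hzE : z ∈ Subgroup.closure {a₂ ^ m, c₂ ^ m} := by
      rcases hz2 with rfl | rfl
      · exact Subgroup.subset_closure (by simp)
      · exact Subgroup.subset_closure (by simp)
    rw [← hE2, hE1] at hzE
    have hzS1 : z ∈ beauvilleSigma a₁ c₁ := by
      have := hle hzE
      rcases hx with rfl | rfl | rfl
      · exact zpowers_subset_sigma_left _ _ m this
      · exact zpowers_subset_sigma_right _ _ m this
      · exact zpowers_subset_sigma_mul _ _ m this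
    have hzS2 : z ∈ beauvilleSigma a₂ c₂ := by
      rcases hz2 with rfl | rfl
      · exact mem_sigma_iff.2 ⟨m, Or.inl rfl⟩
      · exact mem_sigma_iff.2 ⟨m, Or.inr (Or.inl rfl)⟩
    exact hz1 (hd z hzS1 hzS2)
  refine ⟨?_, ?_, ?_, ?_⟩
  · intro h1
    refine hC c₁ (Or.inr (Or.inl rfl)) ?_
    rw [Subgroup.closure_le]
    rintro y (rfl | rfl)
    · rw [h1]; exact one_mem _
    · exact Subgroup.mem_zpowers _
  · intro h1
    refine hC a₁ (Or.inl rfl) ?_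
    rw [Subgroup.closure_le]
    rintro y (rfl | rfl)
    · exact Subgroup.mem_zpowers _
    · rw [h1]; exact one_mem _
  · intro h1
    refine hC a₁ (Or.inl rfl) ?_
    rw [Subgroup.closure_le]
    rintro y (rfl | rfl)
    · exact Subgroup.mem_zpowers _
    · have : c₁ ^ m = (a₁ ^ m)⁻¹ := by
        rw [eq_inv_iff_mul_eq_one, mul_comm]; exact h1
      rw [this]
      exact inv_mem (Subgroup.mem_zpowers _)
  · intro h1
    refine hC a₁ (Or.inl rfl) ?_
    rw [Subgroup.closure_le]
    rintro y (rfl | rfl)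
    · exact Subgroup.mem_zpowers _
    · exact h1

end Fwd2

section Fwd3
variable {G : Type*} [CommGroup G] [Finite G]

lemma zpow_red {u : G} {p : ℕ} (h : u ^ p = 1) (hp : 0 < p) (i : ℤ) :
    ∃ r : ℕ, r < p ∧ u ^ i = u ^ r := by
  have hpz : (0:ℤ) < (p:ℤ) := Int.natCast_pos.2 hp
  refine ⟨(i % p).toNat, ?_, ?_⟩
  · have := Int.emod_lt_of_pos i hpz
    omega
  · have hup : u ^ (p : ℤ) = 1 := by rw [zpow_natCast, h]
    calc u ^ i = u ^ ((p:ℤ) * (i / p) + i % p) := by rw [Int.mul_ediv_add_emod]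
    _ = (u ^ (p:ℤ)) ^ (i / p) * u ^ (i % p) := by rw [zpow_add, zpow_mul]
    _ = u ^ (i % p) := by rw [hup, one_zpow, one_mul]
    _ = u ^ (i % p).toNat := by
        rw [← zpow_natCast, Int.toNat_of_nonneg (Int.emod_nonneg i (by omega))]

lemma rep_closure {u v z : G} {p : ℕ} (hp : 0 < p) (hu : u ^ p = 1) (hv : v ^ p = 1)
    (hz : z ∈ Subgroup.closure ({u, v} : Set G)) :
    ∃ r s : ℕ, r < p ∧ s < p ∧ z = u ^ r * v ^ s := by
  obtain ⟨i, j, hij⟩ := Subgroup.mem_closure_pair.1 hz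
  obtain ⟨r, hr, hru⟩ := zpow_red hu hp i
  obtain ⟨s, hs, hsv⟩ := zpow_red hv hp j
  exact ⟨r, s, hr, hs, by rw [← hij, hru, hsv]⟩

lemma p_contra {p : ℕ} (hp23 : p = 2 ∨ p = 3) {a₁ c₁ a₂ c₂ : G}
    (hg1 : Subgroup.closure {a₁, c₁} = ⊤) (hg2 : Subgroup.closure {a₂, c₂} = ⊤)
    (hd : ∀ x : G, x ∈ beauvilleSigma a₁ c₁ → x ∈ beauvilleSigma a₂ c₂ → x = 1)
    {m : ℕ} (hEne : ∃ g : G, g ^ m ≠ 1) (hpow : ∀ g : G, (g ^ m) ^ p = 1) : False := by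
  have hp : 0 < p := by omega
  obtain ⟨hu1, hv1, huv1, hind1⟩ := side_facts hg1 hg2 hd hEne
  obtain ⟨hu2, hv2, huv2, hind2⟩ :=
    side_facts hg2 hg1 (fun x h1 h2 => hd x h2 h1) hEne
  set u := a₁ ^ m with hu
  set v := c₁ ^ m with hv
  -- both second-pair powers lie in closure {u, v}
  have hmem : ∀ z : G, (z = a₂ ^ m ∨ z = c₂ ^ m) →
      z ∈ Subgroup.closure ({u, v} : Set G) := by
    intro z hz
    have h21 : Subgroup.closure ({a₂ ^ m, c₂ ^ m} : Set G) =
        Subgroup.closure ({u, v} : Set G) := by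
      rw [← closure_pow_eq m hg2, ← closure_pow_eq m hg1]
    rw [← h21]
    rcases hz with rfl | rfl
    · exact Subgroup.subset_closure (by simp)
    · exact Subgroup.subset_closure (by simp)
  -- any such z is killed unless its exponents are nonzero and distinct
  have key : ∀ z : G, (z = a₂ ^ m ∨ z = c₂ ^ m) →
      ∃ r s : ℕ, r < p ∧ s < p ∧ z = u ^ r * v ^ s ∧ r ≠ 0 ∧ s ≠ 0 ∧ r ≠ s := by
    intro z hz
    obtain ⟨r, s, hr, hs, hzrs⟩ := rep_closure hp (hpow a₁) (hpow c₁) (hmem z hz)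
    have hzS2 : z ∈ beauvilleSigma a₂ c₂ := by
      rcases hz with rfl | rfl
      · exact mem_sigma_iff.2 ⟨m, Or.inl rfl⟩
      · exact mem_sigma_iff.2 ⟨m, Or.inr (Or.inl rfl)⟩
    have hzne : z ≠ 1 := by
      rcases hz with rfl | rfl
      · exact hu2
      · exact hv2
    refine ⟨r, s, hr, hs, hzrs, ?_, ?_, ?_⟩
    · rintro rfl
      exact hzne (hd z (by rw [hzrs, pow_zero, one_mul]; exact pow_pow_mem_sigma' a₁ c₁ m s) hzS2)
    · rintro rfl
      exact hzne (hd z (by rw [hzrs, pow_zero, mul_one]; exact pow_pow_mem_sigma a₁ c₁ m r) hzS2)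
    · rintro rfl
      refine hzne (hd z ?_ hzS2)
      have : z = ((a₁ * c₁) ^ m) ^ r := by
        rw [hzrs, mul_pow, mul_pow]
      rw [this]
      exact pow_pow_mem_sigma'' a₁ c₁ m r
  obtain ⟨r, s, hr, hs, hurs, hr0, hs0, hrs⟩ := key _ (Or.inl rfl)
  rcases hp23 with rfl | rfl
  · -- p = 2 : impossible
    interval_cases r <;> interval_cases s <;> omega
  · -- p = 3 : both a₂^m and c₂^m lie in {t, t²} with t = u * v²
    obtain ⟨r', s', hr', hs', hvrs, hr0', hs0', hrs'⟩ := key _ (Or.inr rfl)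
    set t : G := u * v ^ 2 with ht
    have hu3 : u ^ 3 = 1 := hpow a₁
    have hv3 : v ^ 3 = 1 := hpow c₁
    have ht3 : t ^ 3 = 1 := by
      rw [ht, mul_pow, hu3, one_mul, ← pow_mul, mul_comm 2 3, pow_mul, hv3, one_pow]
    have hsq : t ^ 2 = u ^ 2 * v := by
      have h4 : (v ^ 2) ^ 2 = v ^ 3 * v := by
        rw [← pow_mul]; exact pow_succ v 3
      rw [ht, mul_pow, h4, hv3, one_mul]
    have hcase : ∀ z : G, ∀ r s : ℕ, r < 3 → s < 3 → z = u ^ r * v ^ s →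
        r ≠ 0 → s ≠ 0 → r ≠ s → z = t ∨ z = t ^ 2 := by
      intro z r s h1 h2 h3 h4 h5 h6
      have hor : (r = 1 ∧ s = 2) ∨ (r = 2 ∧ s = 1) := by omega
      rcases hor with ⟨rfl, rfl⟩ | ⟨rfl, rfl⟩
      · left; rw [h3, ht, pow_one]
      · right; rw [h3, pow_one, hsq]
    have hA := hcase _ r s hr hs hurs hr0 hs0 hrs
    have hB := hcase _ r' s' hr' hs' hvrs hr0' hs0' hrs'
    -- then c₂^m ∈ zpowers (a₂^m), contradiction
    refine hind2 ?_
    have htt : t = (t ^ 2) ^ 2 := by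
      rw [← pow_mul]
      have : t ^ 4 = t ^ 3 * t := by rw [← pow_succ]
      rw [this, ht3, one_mul]
    rcases hA with hA | hA <;> rcases hB with hB | hB
    · rw [hB, ← hA]; exact Subgroup.mem_zpowers _
    · rw [hB, ← hA]; exact pow_mem (Subgroup.mem_zpowers _) 2
    · rw [hB, htt, ← hA]; exact pow_mem (Subgroup.mem_zpowers _) 2
    · rw [hB, ← hA]; exact Subgroup.mem_zpowers _

end Fwd3

lemma nat_eq_of_dvd {d n : ℕ} (h0 : 0 < n) (hd : d ∣ n)
    (h : ∀ p : ℕ, p.Prime → p ∣ n → ¬ d ∣ n / p) : d = n := by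
  by_contra hne
  have hdlt : d < n := lt_of_le_of_ne (Nat.le_of_dvd h0 hd) hne
  have h1 : n / d ≠ 1 := by
    intro hq
    have := Nat.div_mul_cancel hd
    rw [hq, one_mul] at this
    omega
  obtain ⟨p, hp, hpd⟩ := Nat.exists_prime_and_dvd h1
  have hpn : p ∣ n := hpd.trans (Nat.div_dvd_of_dvd hd)
  refine h p hp hpn ?_
  obtain ⟨t, ht⟩ := hpd
  have hn : n = d * (p * t) := by rw [← ht, Nat.mul_div_cancel' hd]
  have : n / p = d * t := by
    rw [hn]
    rw [show d * (p * t) = p * (d * t) by ring]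
    exact Nat.mul_div_cancel_left _ hp.pos
  exact ⟨t, this⟩

section Main
variable {G : Type*} [CommGroup G] [Finite G]

theorem forward_dir [Nontrivial G] {a₁ c₁ a₂ c₂ : G}
    (hg1 : Subgroup.closure {a₁, c₁} = ⊤) (hg2 : Subgroup.closure {a₂, c₂} = ⊤)
    (hd : ∀ x : G, x ∈ beauvilleSigma a₁ c₁ → x ∈ beauvilleSigma a₂ c₂ → x = 1) :
    ∃ n : ℕ, 1 < n ∧ Nat.gcd n 6 = 1 ∧
      Nonempty (G ≃* Multiplicative (ZMod n × ZMod n)) := by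
  set n := Monoid.exponent G with hn
  have hn1 : 1 < n := Monoid.one_lt_exponent
  have hn0 : 0 < n := by omega
  have hpowN : ∀ g : G, g ^ n = 1 := fun g => Monoid.pow_exponent_eq_one g
  have hd' : ∀ x : G, x ∈ beauvilleSigma a₂ c₂ → x ∈ beauvilleSigma a₁ c₁ → x = 1 :=
    fun x h1 h2 => hd x h2 h1
  -- basic facts per prime divisor of n
  have hEne : ∀ p : ℕ, p.Prime → p ∣ n → ∃ g : G, g ^ (n / p) ≠ 1 := by
    intro p hp hpn
    by_contra hcon
    push_neg at hcon
    have : n ∣ n / p := Monoid.exponent_dvd_of_forall_pow_eq_one hcon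
    have hlt : n / p < n := Nat.div_lt_self hn0 hp.one_lt
    have hpos : 0 < n / p := Nat.div_pos (Nat.le_of_dvd hn0 hpn) hp.pos
    have := Nat.le_of_dvd hpos this
    omega
  have hppow : ∀ p : ℕ, p.Prime → p ∣ n → ∀ g : G, (g ^ (n / p)) ^ p = 1 := by
    intro p hp hpn g
    rw [← pow_mul, Nat.div_mul_cancel hpn]
    exact hpowN g
  -- no prime divisor is 2 or 3
  have hno23 : ∀ p : ℕ, p.Prime → p ∣ n → p ≠ 2 ∧ p ≠ 3 := by
    intro p hp hpn
    constructor
    · rintro rfl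
      exact p_contra (Or.inl rfl) hg1 hg2 hd (hEne 2 hp hpn) (hppow 2 hp hpn)
    · rintro rfl
      exact p_contra (Or.inr rfl) hg1 hg2 hd (hEne 3 hp hpn) (hppow 3 hp hpn)
  -- side facts for all prime divisors
  have hfacts : ∀ p : ℕ, p.Prime → p ∣ n →
      a₁ ^ (n / p) ≠ 1 ∧ c₁ ^ (n / p) ≠ 1 ∧ a₁ ^ (n / p) * c₁ ^ (n / p) ≠ 1 ∧
        c₁ ^ (n / p) ∉ Subgroup.zpowers (a₁ ^ (n / p)) :=
    fun p hp hpn => side_facts hg1 hg2 hd (hEne p hp hpn)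
  -- orders of a₁ and c₁ are n
  have horda : orderOf a₁ = n := by
    refine nat_eq_of_dvd hn0 (Monoid.order_dvd_exponent a₁) ?_
    intro p hp hpn hdvd
    exact (hfacts p hp hpn).1 (orderOf_dvd_iff_pow_eq_one.1 hdvd)
  have hordc : orderOf c₁ = n := by
    refine nat_eq_of_dvd hn0 (Monoid.order_dvd_exponent c₁) ?_
    intro p hp hpn hdvd
    exact (hfacts p hp hpn).2.1 (orderOf_dvd_iff_pow_eq_one.1 hdvd)
  -- the cyclic subgroups generated by a₁ and c₁ intersect trivially
  have hAC : ∀ z : G, z ∈ Subgroup.zpowers a₁ → z ∈ Subgroup.zpowers c₁ → z = 1 := by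
    intro z hza hzc
    by_contra hz1
    have hq1 : orderOf z ≠ 1 := fun h => hz1 (orderOf_eq_one_iff.1 h)
    obtain ⟨p, hp, hpq⟩ := Nat.exists_prime_and_dvd hq1
    have hqn : orderOf z ∣ n := horda ▸ orderOf_dvd_of_mem_zpowers hza
    have hpn : p ∣ n := hpq.trans hqn
    have hq0 : orderOf z ≠ 0 := by
      have := (isOfFinOrder_of_finite z).orderOf_pos
      omega
    set w := z ^ (orderOf z / p) with hw
    have hword : orderOf w = p := by
      rw [hw, orderOf_pow, Nat.gcd_eq_right (Nat.div_dvd_of_dvd hpq),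
        Nat.div_div_self hpq hq0]
    have hwne : w ≠ 1 := by
      intro h
      rw [h, orderOf_one] at hword
      exact hp.ne_one hword.symm
    have hwp : w ^ p = 1 := by rw [← hword]; exact pow_orderOf_eq_one w
    -- w lies in the unique subgroup of order p of each cyclic group
    have hkey : ∀ x : G, orderOf x = n → w ∈ Subgroup.zpowers x →
        w ∈ Subgroup.zpowers (x ^ (n / p)) := by
      intro x hx hwx
      obtain ⟨k, hk⟩ := ((isOfFinOrder_of_finite x).mem_powers_iff_mem_zpowers).2 hwx
      dsimp only at hk
      have hxk : x ^ (k * p) = 1 := by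
        rw [pow_mul, hk, hwp]
      have hnkp : n ∣ k * p := by
        rw [← hx]
        exact orderOf_dvd_iff_pow_eq_one.2 hxk
      have hnp : n / p * p = n := Nat.div_mul_cancel hpn
      have : (n / p) * p ∣ k * p := by rw [hnp]; exact hnkp
      obtain ⟨t, ht⟩ := Nat.dvd_of_mul_dvd_mul_right hp.pos this
      have hx2 : (x ^ (n / p)) ^ t = w := by
        rw [← pow_mul, ← ht, hk]
      refine ⟨(t : ℤ), ?_⟩
      show (x ^ (n / p)) ^ (t : ℤ) = w
      rw [zpow_natCast, hx2]
    have hwa : w ∈ Subgroup.zpowers (a₁ ^ (n / p)) :=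
      hkey a₁ horda ((Subgroup.zpowers a₁).pow_mem hza _)
    have hwc : w ∈ Subgroup.zpowers (c₁ ^ (n / p)) :=
      hkey c₁ hordc ((Subgroup.zpowers c₁).pow_mem hzc _)
    -- zpowers w equals both order-p subgroups
    have hordu : ∀ x : G, x ^ (n / p) ≠ 1 → orderOf (x ^ (n / p)) = p := by
      intro x hx
      have h1 : orderOf (x ^ (n / p)) ∣ p :=
        orderOf_dvd_iff_pow_eq_one.2 (by rw [← pow_mul, Nat.div_mul_cancel hpn]; exact hpowN x)
      rcases (Nat.dvd_prime hp).1 h1 with h | h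
      · exact absurd (orderOf_eq_one_iff.1 h) hx
      · exact h
    have hequ : ∀ x : G, x ^ (n / p) ≠ 1 → w ∈ Subgroup.zpowers (x ^ (n / p)) →
        Subgroup.zpowers w = Subgroup.zpowers (x ^ (n / p)) := by
      intro x hx hwx
      refine Subgroup.eq_of_le_of_card_ge (Subgroup.zpowers_le.2 hwx) ?_
      rw [Nat.card_zpowers, Nat.card_zpowers, hword, hordu x hx]
    have h1 := hequ a₁ (hfacts p hp hpn).1 hwa
    have h2 := hequ c₁ (hfacts p hp hpn).2.1 hwc
    refine (hfacts p hp hpn).2.2.2 ?_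
    rw [← h1, h2]
    exact Subgroup.mem_zpowers _
  -- coprimality with 6
  have hcop : Nat.gcd n 6 = 1 := by
    have h2n : ¬ (2 ∣ n) := fun h => (hno23 2 Nat.prime_two h).1 rfl
    have h3n : ¬ (3 ∣ n) := fun h => (hno23 3 Nat.prime_three h).2 rfl
    have c2 : Nat.Coprime n 2 := (Nat.Prime.coprime_iff_not_dvd Nat.prime_two |>.2 h2n).symm
    have c3 : Nat.Coprime n 3 := (Nat.Prime.coprime_iff_not_dvd Nat.prime_three |>.2 h3n).symm
    have : Nat.Coprime n 6 := by
      rw [show (6 : ℕ) = 2 * 3 by norm_num]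
      exact Nat.Coprime.mul_right c2 c3
    exact this
  -- construct the isomorphism
  haveI : NeZero n := ⟨by omega⟩
  haveI : Fact (1 < n) := ⟨hn1⟩
  have hpf : ∀ a : G, a ^ n = 1 →
      (zmultiplesHom (Additive G) (Additive.ofMul a)) (n : ℤ) = 0 := by
    intro a ha
    show (n : ℤ) • Additive.ofMul a = 0
    rw [← ofMul_zpow, zpow_natCast, ha]
    rfl
  set fa : ZMod n →+ Additive G :=
    ZMod.lift n ⟨zmultiplesHom (Additive G) (Additive.ofMul a₁), hpf a₁ (hpowN a₁)⟩ with hfa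
  set fc : ZMod n →+ Additive G :=
    ZMod.lift n ⟨zmultiplesHom (Additive G) (Additive.ofMul c₁), hpf c₁ (hpowN c₁)⟩ with hfc
  have heval : ∀ (a : G) (hpfa : (zmultiplesHom (Additive G) (Additive.ofMul a)) (n : ℤ) = 0)
      (x : ZMod n),
      ZMod.lift n ⟨zmultiplesHom (Additive G) (Additive.ofMul a), hpfa⟩ x
        = Additive.ofMul (a ^ x.val) := by
    intro a hpfa x
    have hx : ((x.val : ℤ) : ZMod n) = x := by
      push_cast
      exact ZMod.natCast_rightInverse x
    calc ZMod.lift n ⟨zmultiplesHom (Additive G) (Additive.ofMul a), hpfa⟩ x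
        = ZMod.lift n ⟨zmultiplesHom (Additive G) (Additive.ofMul a), hpfa⟩
            ((x.val : ℤ) : ZMod n) := by rw [hx]
      _ = (zmultiplesHom (Additive G) (Additive.ofMul a)) (x.val : ℤ) := ZMod.lift_coe n _ _
      _ = ((x.val : ℤ)) • Additive.ofMul a := rfl
      _ = Additive.ofMul (a ^ (x.val : ℤ)) := (ofMul_zpow _ _).symm
      _ = Additive.ofMul (a ^ x.val) := by rw [zpow_natCast]
  set ψ : ZMod n × ZMod n →+ Additive G := fa.coprod fc with hψ
  have hψeval : ∀ z : ZMod n × ZMod n,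
      ψ z = Additive.ofMul (a₁ ^ z.1.val * c₁ ^ z.2.val) := by
    intro z
    show fa z.1 + fc z.2 = _
    rw [hfa, hfc, heval a₁ (hpf a₁ (hpowN a₁)) z.1, heval c₁ (hpf c₁ (hpowN c₁)) z.2]
    rfl
  have hinj : Function.Injective ψ := by
    rw [injective_iff_map_eq_zero]
    intro z hz
    rw [hψeval] at hz
    have hz' : a₁ ^ z.1.val * c₁ ^ z.2.val = 1 := hz
    have hmem : a₁ ^ z.1.val ∈ Subgroup.zpowers c₁ := by
      have : a₁ ^ z.1.val = (c₁ ^ z.2.val)⁻¹ := by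
        rw [eq_inv_iff_mul_eq_one]; exact hz'
      rw [this]
      exact inv_mem ((Subgroup.zpowers c₁).pow_mem (Subgroup.mem_zpowers c₁) _)
    have ha1 : a₁ ^ z.1.val = 1 :=
      hAC _ ((Subgroup.zpowers a₁).pow_mem (Subgroup.mem_zpowers a₁) _) hmem
    have hc1 : c₁ ^ z.2.val = 1 := by
      rw [ha1, one_mul] at hz'
      exact hz'
    have hx0 : z.1 = 0 := by
      have hdvd : orderOf a₁ ∣ z.1.val := orderOf_dvd_iff_pow_eq_one.2 ha1
      rw [horda] at hdvd
      exact (ZMod.val_eq_zero _).1 (Nat.eq_zero_of_dvd_of_lt hdvd (ZMod.val_lt z.1))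
    have hy0 : z.2 = 0 := by
      have hdvd : orderOf c₁ ∣ z.2.val := orderOf_dvd_iff_pow_eq_one.2 hc1
      rw [hordc] at hdvd
      exact (ZMod.val_eq_zero _).1 (Nat.eq_zero_of_dvd_of_lt hdvd (ZMod.val_lt z.2))
    exact Prod.ext hx0 hy0
  have hsurj : Function.Surjective ψ := by
    intro b
    have hb : Additive.toMul b ∈ Subgroup.closure ({a₁, c₁} : Set G) := by
      rw [hg1]; trivial
    suffices h : ∃ z : ZMod n × ZMod n, ψ z = Additive.ofMul (Additive.toMul b) by
      exact h
    refine Subgroup.closure_induction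
      (p := fun x _ => ∃ z : ZMod n × ZMod n, ψ z = Additive.ofMul x) ?_ ?_ ?_ ?_ hb
    · rintro x (rfl | rfl)
      · refine ⟨((1 : ZMod n), (0 : ZMod n)), ?_⟩
        rw [hψeval]
        simp [ZMod.val_one, ZMod.val_zero]
      · refine ⟨((0 : ZMod n), (1 : ZMod n)), ?_⟩
        rw [hψeval]
        simp [ZMod.val_one, ZMod.val_zero]
    · exact ⟨0, by simp⟩
    · rintro x y hx hy ⟨zx, hzx⟩ ⟨zy, hzy⟩
      exact ⟨zx + zy, by rw [map_add, hzx, hzy]; rfl⟩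
    · rintro x hx ⟨zx, hzx⟩
      exact ⟨-zx, by rw [map_neg, hzx]; rfl⟩
  have e : (ZMod n × ZMod n) ≃+ Additive G := AddEquiv.ofBijective ψ ⟨hinj, hsurj⟩
  exact ⟨n, hn1, hcop,
    ⟨(MulEquiv.multiplicativeAdditive G).symm.trans (AddEquiv.toMultiplicative e.symm)⟩⟩

end Main


/-- A nontrivial finite abelian group admits an unmixed Beauville structure iff it
is isomorphic to `(ℤ/n)²` for some `n > 1` coprime to `6`. -/
theorem abelian_unmixedBeauville_iff {G : Type*} [CommGroup G] [Finite G] [Nontrivial G] :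
    (∃ a₁ c₁ a₂ c₂ : G, IsUnmixedBeauvilleStructure a₁ c₁ a₂ c₂) ↔
      ∃ n : ℕ, 1 < n ∧ Nat.gcd n 6 = 1 ∧
        Nonempty (G ≃* Multiplicative (ZMod n × ZMod n)) := by
  constructor
  · rintro ⟨a₁, c₁, a₂, c₂, h1, h2, h3⟩
    have hd : ∀ x : G, x ∈ beauvilleSigma a₁ c₁ → x ∈ beauvilleSigma a₂ c₂ → x = 1 := by
      intro x hx1 hx2
      have : x ∈ beauvilleSigma a₁ c₁ ∩ beauvilleSigma a₂ c₂ := ⟨hx1, hx2⟩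
      rw [h3] at this
      exact this
    exact forward_dir h1 h2 hd
  · rintro ⟨n, hn1, h6, ⟨e⟩⟩
    haveI : NeZero n := ⟨by omega⟩
    have hstr := zm_structure (n := n) hn1 h6
    exact ⟨_, _, _, _, isUnmixed_map e.symm hstr⟩
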